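/- If the source condition ∑_i x_i²/λ_i^{2μ} ≤ C² holds for some 0 < μ ≤ 1/2 and C > 0, then B(α)² := ∑_i α/(λ_i+α) · x_i² ≤ C² α^{2μ} for all α > 0. -/
import Mathlib


/-- If the source condition `∑_i x_i²/λ_i^{2μ} ≤ C²` holds with `0 < μ ≤ 1/2`, `C > 0`, then
`B(α)² = ∑_i α/(λ_i+α) x_i² ≤ C² α^{2μ}` for all `α > 0`. -/
theorem stmt_6 (lam x : ℕ → ℝ) (μ C : ℝ) (hlam : ∀ i, 0 < lam i)
    (hμ : 0 < μ) (hμ' : μ ≤ 1 / 2) (hC : 0 < C)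
    (hsum : Summable fun i => (x i) ^ 2 / (lam i) ^ (2 * μ))
    (hsource : (∑' i, (x i) ^ 2 / (lam i) ^ (2 * μ)) ≤ C ^ 2) :
    ∀ α : ℝ, 0 < α → (∑' i, α / (lam i + α) * (x i) ^ 2) ≤ C ^ 2 * α ^ (2 * μ) := by
  intro α hα
  have h2μpos : 0 < 2 * μ := by linarith
  have h2μle : 2 * μ ≤ 1 := by linarith
  -- key pointwise bound
  have key : ∀ i, α / (lam i + α) * (x i) ^ 2 ≤
      α ^ (2 * μ) * ((x i) ^ 2 / (lam i) ^ (2 * μ)) := by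
    intro i
    have hl := hlam i
    set t : ℝ := α / lam i with ht
    have htpos : 0 < t := div_pos hα hl
    have hfrac : α / (lam i + α) = t / (1 + t) := by
      rw [ht]; field_simp
    have hmain : t / (1 + t) ≤ t ^ (2 * μ) := by
      rcases le_or_gt t 1 with h1 | h1
      · have : t ^ (2 * μ) ≥ t ^ (1 : ℝ) :=
          Real.rpow_le_rpow_of_exponent_ge htpos h1 h2μle
        have h2 : t / (1 + t) ≤ t := by
          rw [div_le_iff₀ (by linarith)]
          nlinarith
        calc t / (1 + t) ≤ t := h2
          _ = t ^ (1 : ℝ) := (Real.rpow_one t).symm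
          _ ≤ t ^ (2 * μ) := this
      · have h2 : (1 : ℝ) ≤ t ^ (2 * μ) :=
          Real.one_le_rpow h1.le h2μpos.le
        have h3 : t / (1 + t) ≤ 1 := by
          rw [div_le_one (by linarith)]; linarith
        linarith
    have hdiv : t ^ (2 * μ) = α ^ (2 * μ) / (lam i) ^ (2 * μ) := by
      rw [ht, Real.div_rpow hα.le hl.le]
    have hx2 : (0 : ℝ) ≤ (x i) ^ 2 := sq_nonneg _
    calc α / (lam i + α) * (x i) ^ 2 = t / (1 + t) * (x i) ^ 2 := by rw [hfrac]
      _ ≤ t ^ (2 * μ) * (x i) ^ 2 := mul_le_mul_of_nonneg_right hmain hx2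
      _ = α ^ (2 * μ) * ((x i) ^ 2 / (lam i) ^ (2 * μ)) := by
          rw [hdiv]; ring
  have hsum2 : Summable fun i => α ^ (2 * μ) * ((x i) ^ 2 / (lam i) ^ (2 * μ)) :=
    hsum.mul_left _
  have hsum1 : Summable fun i => α / (lam i + α) * (x i) ^ 2 := by
    apply Summable.of_nonneg_of_le _ key hsum2
    intro i
    have hl := hlam i
    positivity
  calc (∑' i, α / (lam i + α) * (x i) ^ 2)
      ≤ ∑' i, α ^ (2 * μ) * ((x i) ^ 2 / (lam i) ^ (2 * μ)) :=
        Summable.tsum_le_tsum key hsum1 hsum2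
    _ = α ^ (2 * μ) * ∑' i, (x i) ^ 2 / (lam i) ^ (2 * μ) := tsum_mul_left
    _ ≤ α ^ (2 * μ) * C ^ 2 := by
        apply mul_le_mul_of_nonneg_left hsource (Real.rpow_nonneg hα.le _)
    _ = C ^ 2 * α ^ (2 * μ) := mul_comm _ _
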